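/- Let Q = Z_{q_1} × ⋯ × Z_{q_n} with q_1 ≤ ⋯ ≤ q_n and not all q_i equal. Then there exists a mixed Steiner system MS(1, k, Q) if and only if Σ_{i=1}^{n−1}(q_i − 1) − (q_n − 1)(k − 1) is nonnegative and divisible by k. -/

import Mathlib

open Finset

lemma ms_norm_one_of {n : ℕ} {q : Fin (n+1) → ℕ} (x : ∀ i, ZMod (q i)) (i : Fin (n+1))
    (h1 : x i ≠ 0) (h0 : ∀ j, j ≠ i → x j = 0) : hammingNorm x = 1 := by
  unfold hammingNorm
  have : (univ.filter fun j => x j ≠ 0) = {i} := by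
    ext j
    simp only [mem_filter, mem_univ, true_and, mem_singleton]
    constructor
    · intro hj; by_contra hne; exact hj (h0 j hne)
    · rintro rfl; exact h1
  rw [this, card_singleton]


lemma ms_norm_one {n : ℕ} {q : Fin (n+1) → ℕ} (x : ∀ i, ZMod (q i))
    (hx : hammingNorm x = 1) : ∃ i, x i ≠ 0 ∧ ∀ j, j ≠ i → x j = 0 := by
  unfold hammingNorm at hx
  obtain ⟨i0, hi0⟩ := Finset.card_eq_one.mp hx
  have h1 : x i0 ≠ 0 := by
    have : i0 ∈ filter (fun i => x i ≠ 0) univ := by rw [hi0]; exact mem_singleton_self i0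
    exact (mem_filter.mp this).2
  refine ⟨i0, h1, fun j hj => ?_⟩
  by_contra h
  have : j ∈ filter (fun i => x i ≠ 0) univ := mem_filter.mpr ⟨mem_univ j, h⟩
  rw [hi0, mem_singleton] at this
  exact hj this

lemma ms_dist_iff {n : ℕ} {q : Fin (n+1) → ℕ} {k : ℕ} (hk : 1 ≤ k)
    (x : ∀ i, ZMod (q i)) (i : Fin (n+1)) (hx1 : x i ≠ 0) (hx0 : ∀ j, j ≠ i → x j = 0)
    (c : ∀ i, ZMod (q i)) (hc : hammingNorm c = k) :
    hammingDist x c = k - 1 ↔ c i = x i := by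
  unfold hammingNorm at hc
  unfold hammingDist
  constructor
  · intro h
    by_contra hne
    by_cases hci : c i = 0
    · have : (univ.filter fun j => x j ≠ c j)
          = insert i (univ.filter fun j => c j ≠ 0) := by
        ext j
        simp only [mem_filter, mem_univ, true_and, mem_insert]
        by_cases hji : j = i
        · subst hji; simp [hci, hx1]
        · rw [hx0 j hji]
          simp [hji, ne_comm]
      rw [this, card_insert_of_notMem (by simp [hci]), hc] at h
      omega
    · have hne' : x i ≠ c i := fun hh => hne hh.symm
      have : (univ.filter fun j => x j ≠ c j)
          = (univ.filter fun j => c j ≠ 0) := by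
        ext j
        simp only [mem_filter, mem_univ, true_and]
        by_cases hji : j = i
        · subst hji; simp [hci, hne']
        · rw [hx0 j hji]; simp [ne_comm]
      rw [this, hc] at h
      omega
  · intro h
    have : (univ.filter fun j => x j ≠ c j)
        = (univ.filter fun j => c j ≠ 0).erase i := by
      ext j
      simp only [mem_filter, mem_univ, true_and, mem_erase]
      by_cases hji : j = i
      · subst hji; simp [h]
      · rw [hx0 j hji]
        simp [hji, ne_comm]
    rw [this, card_erase_of_mem (by simp [h, hx1]), hc]

lemma ms_mod_key {m : ℕ} (hm : 0 < m) (b o : ℕ) (hb : b < m) :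
    (o + (m + b - o % m) % m) % m = b := by
  have hrm : o % m < m := Nat.mod_lt _ hm
  have hdm : m * (o / m) + o % m = o := Nat.div_add_mod o m
  have step : o + (m + b - o % m) % m ≡ o + (m + b - o % m) [MOD m] :=
    Nat.ModEq.add_left o ((Nat.mod_modEq (m + b - o % m) m))
  have e1 : o + (m + b - o % m) = b + m * (o / m + 1) := by
    rw [Nat.mul_add, Nat.mul_one]; omega
  calc (o + (m + b - o % m) % m) % m
      = (o + (m + b - o % m)) % m := step
    _ = (b + m * (o / m + 1)) % m := by rw [e1]
    _ = b % m := Nat.add_mul_mod_self_left b m (o / m + 1)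
    _ = b := Nat.mod_eq_of_lt hb

lemma ms_mod_unique {m : ℕ} (hm : 0 < m) {b o j : ℕ} (hb : b < m) (hj : j < m)
    (h : (o + j) % m = b) : j = (m + b - o % m) % m := by
  have h2 := ms_mod_key hm b o hb
  have h3 : (o + j) ≡ (o + (m + b - o % m) % m) [MOD m] := by
    unfold Nat.ModEq; rw [h, h2]
  have h4 : j ≡ (m + b - o % m) % m [MOD m] := Nat.ModEq.add_left_cancel' o h3
  have h5 : (m + b - o % m) % m < m := Nat.mod_lt _ hm
  unfold Nat.ModEq at h4
  rwa [Nat.mod_eq_of_lt hj, Nat.mod_eq_of_lt h5] at h4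

lemma ms_count_mod {m k b : ℕ} (hm : 0 < m) (hb : b < m) :
    ((Finset.range (m * k)).filter (fun t => t % m = b)).card = k := by
  have : ((Finset.range (m * k)).filter (fun t => t % m = b)).card = (Finset.range k).card := by
    apply Finset.card_bij (fun t _ => t / m)
    · intro t ht
      simp only [mem_filter, mem_range] at ht
      simp only [mem_range]
      by_contra hcon
      push_neg at hcon
      have h6 : m * k ≤ t := by
        calc m * k = k * m := Nat.mul_comm m k
          _ ≤ t / m * m := Nat.mul_le_mul_right m hcon
          _ ≤ t := Nat.div_mul_le_self t m
      omega
    · intro t1 h1 t2 h2 heq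
      simp only [mem_filter, mem_range] at h1 h2
      have d1 := Nat.div_add_mod t1 m
      have d2 := Nat.div_add_mod t2 m
      rw [heq] at d1
      omega
    · intro u hu
      simp only [mem_range] at hu
      refine ⟨b + m * u, ?_, ?_⟩
      · simp only [mem_filter, mem_range]
        constructor
        · calc b + m * u < m + m * u := by omega
            _ = m * (u + 1) := by ring
            _ ≤ m * k := Nat.mul_le_mul_left m hu
        · rw [Nat.add_mul_mod_self_left, Nat.mod_eq_of_lt hb]
      · rw [Nat.add_mul_div_left _ _ hm, Nat.div_eq_of_lt hb, Nat.zero_add]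
  rw [this, Finset.card_range]

lemma ms_locate (w : ℕ → ℕ) : ∀ N t, t < ∑ u ∈ Finset.range N, w u →
    ∃ v < N, (∑ u ∈ Finset.range v, w u) ≤ t ∧ t < (∑ u ∈ Finset.range v, w u) + w v := by
  intro N
  induction N with
  | zero => intro t ht; simp at ht
  | succ N ih =>
    intro t ht
    by_cases h : t < ∑ u ∈ Finset.range N, w u
    · obtain ⟨v, hv, h1, h2⟩ := ih t h
      exact ⟨v, by omega, h1, h2⟩
    · rw [Finset.sum_range_succ] at ht
      exact ⟨N, by omega, by omega, by omega⟩
/-- Let `Q = Z_{q₁} × ⋯ × Z_{q_{n+1}}` with `q₁ ≤ ⋯ ≤ q_{n+1}`, not all equal. There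
exists a mixed Steiner system `MS(1, k, Q)` (a set of weight-`k` words over `Q` such that
every weight-1 word is within Hamming distance `k - 1` of exactly one codeword) if and
only if `Σ_{i<n} (qᵢ - 1) - (q_{n+1} - 1)(k - 1)` is nonnegative and divisible by `k`. -/

theorem stmt16 (n k : ℕ) (hk : 1 ≤ k) (q : Fin (n + 1) → ℕ) (hq : ∀ i, 2 ≤ q i)
    (hmono : Monotone q) (hne : ∃ i j, q i ≠ q j) :
    (∃ C : Finset (∀ i, ZMod (q i)),
      (∀ c ∈ C, hammingNorm c = k) ∧
      ∀ x : ∀ i, ZMod (q i), hammingNorm x = 1 →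
        ∃! c, c ∈ C ∧ hammingDist x c = k - 1) ↔
    ((q (Fin.last n) - 1) * (k - 1) ≤ ∑ i : Fin n, (q i.castSucc - 1) ∧
      k ∣ (∑ i : Fin n, (q i.castSucc - 1)) - (q (Fin.last n) - 1) * (k - 1)) := by
  haveI : ∀ i, NeZero (q i) := fun i => ⟨by have := hq i; omega⟩
  constructor
  · rintro ⟨C, hC1, hC2⟩
    -- single words
    have hsingle1 : ∀ (i : Fin (n+1)) (α : ZMod (q i)),
        (Pi.single i α : ∀ j, ZMod (q j)) i = α := fun i α => Pi.single_eq_same (M := fun j => ZMod (q j)) i α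
    have hsingle0 : ∀ (i : Fin (n+1)) (α : ZMod (q i)) (j : Fin (n+1)), j ≠ i →
        (Pi.single i α : ∀ j, ZMod (q j)) j = 0 := fun i α j hj => Pi.single_eq_of_ne (M := fun j => ZMod (q j)) hj α
    have hg : ∀ p : (Σ i : Fin (n+1), ZMod (q i)), p.2 ≠ 0 →
        ∃ c, (c ∈ C ∧ c p.1 = p.2) ∧ ∀ c', c' ∈ C → c' p.1 = p.2 → c' = c := by
      rintro ⟨i, α⟩ hα
      have hnorm : hammingNorm (Pi.single i α : ∀ j, ZMod (q j)) = 1 :=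
        ms_norm_one_of _ i (by rw [hsingle1]; exact hα) (fun j hj => hsingle0 i α j hj)
      obtain ⟨c, ⟨hcC, hcd⟩, hu⟩ := hC2 _ hnorm
      have hxi : (Pi.single i α : ∀ j, ZMod (q j)) i ≠ 0 := by rw [hsingle1]; exact hα
      have hci : c i = α := by
        have := (ms_dist_iff hk _ i hxi (fun j hj => hsingle0 i α j hj) c (hC1 c hcC)).mp hcd
        rwa [hsingle1] at this
      refine ⟨c, ⟨hcC, hci⟩, fun c' hc'C hc'i => ?_⟩
      apply hu
      refine ⟨hc'C, ?_⟩
      apply (ms_dist_iff hk _ i hxi (fun j hj => hsingle0 i α j hj) c' (hC1 c' hc'C)).mpr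
      rw [hsingle1]; exact hc'i
    choose g hg1 hg2 using hg
    set G : (Σ i : Fin (n+1), ZMod (q i)) → (∀ i, ZMod (q i)) :=
      fun p => if h : p.2 ≠ 0 then g p h else 0 with hG
    have hGval : ∀ (p : Σ i : Fin (n+1), ZMod (q i)) (h : p.2 ≠ 0),
        G p ∈ C ∧ (G p) p.1 = p.2 := by
      intro p h
      rw [hG]; simp only [dif_pos h]
      exact hg1 p h
    have hGuniq : ∀ (p : Σ i : Fin (n+1), ZMod (q i)) (h : p.2 ≠ 0) (c : ∀ i, ZMod (q i)),
        c ∈ C → c p.1 = p.2 → c = G p := by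
      intro p h c hc hcp
      rw [hG]; simp only [dif_pos h]
      exact hg2 p h c hc hcp
    set T : Finset (Σ i : Fin (n+1), ZMod (q i)) :=
      univ.sigma (fun i => univ.filter (fun α => α ≠ 0)) with hT
    have hTmem : ∀ p : (Σ i : Fin (n+1), ZMod (q i)), p ∈ T ↔ p.2 ≠ 0 := by
      rintro ⟨i, α⟩
      simp [hT]
    have hmapsto : ∀ p ∈ T, G p ∈ C := fun p hp => (hGval p ((hTmem p).mp hp)).1
    have hcard := Finset.card_eq_sum_card_fiberwise hmapsto
    have hfiber : ∀ c ∈ C, (T.filter fun p => G p = c).card = k := by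
      intro c hc
      rw [← hC1 c hc]
      unfold hammingNorm
      apply Finset.card_bij (fun p _ => p.1)
      · intro p hp
        simp only [mem_filter] at hp ⊢
        obtain ⟨hpT, hpG⟩ := hp
        have h2 := ((hGval p ((hTmem p).mp hpT)).2)
        rw [hpG] at h2
        exact ⟨mem_univ _, by rw [h2]; exact (hTmem p).mp hpT⟩
      · rintro ⟨i1, α1⟩ h1 ⟨i2, α2⟩ h2 (heq : i1 = i2)
        subst heq
        simp only [mem_filter] at h1 h2
        have e1 := ((hGval _ ((hTmem _).mp h1.1)).2)
        have e2 := ((hGval _ ((hTmem _).mp h2.1)).2)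
        rw [h1.2] at e1
        rw [h2.2] at e2
        simp only at e1 e2
        rw [← e1, ← e2]
      · intro i hi
        simp only [mem_filter, mem_univ, true_and] at hi
        refine ⟨⟨i, c i⟩, ?_, rfl⟩
        simp only [mem_filter]
        constructor
        · exact (hTmem ⟨i, c i⟩).mpr hi
        · exact (hGuniq ⟨i, c i⟩ hi c hc rfl).symm
    have hTcard : T.card = ∑ i : Fin (n+1), (q i - 1) := by
      rw [hT, Finset.card_sigma]
      apply Finset.sum_congr rfl
      intro i _
      rw [Finset.filter_ne', Finset.card_erase_of_mem (mem_univ 0), Finset.card_univ,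
        ZMod.card]
    have hsum : ∑ i : Fin (n+1), (q i - 1) = C.card * k := by
      rw [← hTcard, hcard]
      rw [Finset.sum_congr rfl hfiber, Finset.sum_const, smul_eq_mul]
    -- q last - 1 ≤ C.card
    have hL : q (Fin.last n) - 1 ≤ C.card := by
      have : (univ.filter fun α : ZMod (q (Fin.last n)) => α ≠ 0).card ≤ C.card := by
        apply Finset.card_le_card_of_injOn (fun α => G ⟨Fin.last n, α⟩)
        · intro α hα
          simp only [mem_filter, mem_univ, true_and, coe_filter, Set.mem_setOf_eq, mem_coe, coe_univ, Set.mem_univ] at hα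
          exact (hGval ⟨Fin.last n, α⟩ hα).1
        · intro α1 h1 α2 h2 heq
          simp only [coe_filter, Set.mem_setOf_eq] at h1 h2
          have e1 := (hGval ⟨Fin.last n, α1⟩ h1.2).2
          have e2 := (hGval ⟨Fin.last n, α2⟩ h2.2).2
          simp only at e1 e2
          have heq' : G ⟨Fin.last n, α1⟩ = G ⟨Fin.last n, α2⟩ := heq
          rw [← e1, ← e2, heq']
      rwa [Finset.filter_ne', Finset.card_erase_of_mem (mem_univ 0), Finset.card_univ,
        ZMod.card] at this
    rw [Fin.sum_univ_castSucc] at hsum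
    set a := ∑ i : Fin n, (q i.castSucc - 1) with ha
    set L := q (Fin.last n) - 1 with hLdef
    set Ck := C.card with hCk
    obtain ⟨k1, rfl⟩ : ∃ k1, k = k1 + 1 := ⟨k - 1, by omega⟩
    obtain ⟨e, he⟩ : ∃ e, Ck = L + e := ⟨Ck - L, by omega⟩
    have hexp : a = L * k1 + e * (k1 + 1) := by
      have h3 : (L + e) * (k1 + 1) = L * k1 + e * (k1 + 1) + L := by ring
      rw [he, h3] at hsum
      omega
    constructor
    · simp only [Nat.add_sub_cancel]
      omega
    · simp only [Nat.add_sub_cancel]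
      have : a - L * k1 = e * (k1 + 1) := by omega
      rw [this]
      exact ⟨e, by ring⟩
  · rintro ⟨h1, h2⟩
    set L := q (Fin.last n) - 1 with hLdef
    set a := ∑ i : Fin n, (q i.castSucc - 1) with ha
    obtain ⟨d, hd⟩ := h2
    have hda : a = L * (k - 1) + k * d := by omega
    have hLk : L * (k - 1) + L = L * k := by
      obtain ⟨k1, hk1⟩ : ∃ k1, k = k1 + 1 := ⟨k - 1, by omega⟩
      subst hk1
      simp only [Nat.add_sub_cancel]
      ring
    set m := L + d with hm
    have hS : ∑ i : Fin (n+1), (q i - 1) = m * k := by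
      rw [Fin.sum_univ_castSucc, ← ha, ← hLdef]
      calc a + L = L * (k-1) + k * d + L := by omega
        _ = L * k + k * d := by omega
        _ = m * k := by rw [hm]; ring
    have hSpos : 0 < ∑ i : Fin (n+1), (q i - 1) := by
      apply Finset.sum_pos
      · intro i _; have := hq i; omega
      · exact univ_nonempty
    have hmpos : 0 < m := by
      rcases Nat.eq_zero_or_pos m with h | h
      · rw [h, Nat.zero_mul] at hS; omega
      · exact h
    have hclass : ∀ i : Fin (n+1), q i - 1 ≤ m := by
      intro i
      have := hmono (Fin.le_last i)
      omega
    set w : ℕ → ℕ := fun v => if h : v < n+1 then q ⟨v, h⟩ - 1 else 0 with hw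
    set off : ℕ → ℕ := fun v => ∑ u ∈ Finset.range v, w u with hoffdef
    have hov : ∀ v, off v = ∑ u ∈ Finset.range v, w u := fun v => by rw [hoffdef]
    have hwq : ∀ i : Fin (n+1), w i.1 = q i - 1 := by
      intro i
      rw [hw]
      simp only [i.isLt, dif_pos]
    have hofftot : off (n+1) = m * k := by
      have e1 : ∑ i : Fin (n+1), w i.1 = ∑ u ∈ Finset.range (n+1), w u :=
        Fin.sum_univ_eq_sum_range w (n+1)
      have e2 : ∑ i : Fin (n+1), w i.1 = ∑ i : Fin (n+1), (q i - 1) :=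
        Finset.sum_congr rfl (fun i _ => hwq i)
      rw [hov, ← e1, e2, hS]
    have hoffmono : ∀ {v1 v2 : ℕ}, v1 ≤ v2 → off v1 ≤ off v2 := by
      intro v1 v2 h
      rw [hov, hov]
      exact Finset.sum_le_sum_of_subset (Finset.range_subset_range.mpr h)
    have hoffsucc : ∀ v, off (v+1) = off v + w v := fun v => by
      rw [hov, hov, Finset.sum_range_succ]
    set c : ℕ → ∀ i : Fin (n+1), ZMod (q i) := fun b i =>
      if (m + b - (off i.1) % m) % m < q i - 1
      then (((m + b - (off i.1) % m) % m + 1 : ℕ) : ZMod (q i)) else 0 with hcdef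
    have hcval : ∀ b (i : Fin (n+1)), (m + b - (off i.1) % m) % m < q i - 1 →
        c b i = (((m + b - (off i.1) % m) % m + 1 : ℕ) : ZMod (q i)) := by
      intro b i h; rw [hcdef]; simp only [if_pos h]
    have hczero : ∀ b (i : Fin (n+1)), c b i ≠ 0 ↔ (m + b - (off i.1) % m) % m < q i - 1 := by
      intro b i
      by_cases h : (m + b - (off i.1) % m) % m < q i - 1
      · rw [hcval b i h]
        constructor
        · intro _; exact h
        · intro _ hc
          rw [ZMod.natCast_eq_zero_iff] at hc
          have h5 := Nat.le_of_dvd (by omega) hc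
          have := hq i
          omega
      · rw [hcdef]
        simp only [if_neg h]
        constructor
        · intro h0; exact absurd rfl h0
        · intro hlt; exact absurd hlt h
    have hnorm : ∀ b, b < m → hammingNorm (c b) = k := by
      intro b hb
      unfold hammingNorm
      have hcm := ms_count_mod (k := k) hmpos hb
      rw [← hcm]
      apply Finset.card_bij (fun i _ => off i.1 + (m + b - (off i.1) % m) % m)
      · intro i hi
        simp only [mem_filter, mem_univ, true_and] at hi
        rw [hczero] at hi
        simp only [mem_filter, mem_range]
        refine ⟨?_, ms_mod_key hmpos b _ hb⟩
        calc off i.1 + (m + b - (off i.1) % m) % m < off i.1 + w i.1 := by rw [hwq]; omega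
          _ = off (i.1+1) := (hoffsucc i.1).symm
          _ ≤ off (n+1) := hoffmono (by omega)
          _ = m * k := hofftot
      · intro i1 hi1 i2 hi2 heq
        simp only [mem_filter, mem_univ, true_and] at hi1 hi2
        rw [hczero] at hi1 hi2
        by_contra hne12
        have hne' : i1.1 ≠ i2.1 := fun h => hne12 (Fin.ext h)
        rcases Nat.lt_or_ge i1.1 i2.1 with hlt | hge
        · have hlt3 : off i1.1 + (m + b - (off i1.1) % m) % m < off i2.1 := by
            calc off i1.1 + (m + b - (off i1.1) % m) % m < off i1.1 + w i1.1 := by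
                  rw [hwq]; omega
              _ = off (i1.1+1) := (hoffsucc i1.1).symm
              _ ≤ off i2.1 := hoffmono hlt
          omega
        · have hlt2 : i2.1 < i1.1 := by omega
          have hlt3 : off i2.1 + (m + b - (off i2.1) % m) % m < off i1.1 := by
            calc off i2.1 + (m + b - (off i2.1) % m) % m < off i2.1 + w i2.1 := by
                  rw [hwq]; omega
              _ = off (i2.1+1) := (hoffsucc i2.1).symm
              _ ≤ off i1.1 := hoffmono hlt2
          omega
      · intro t ht
        simp only [mem_filter, mem_range] at ht
        obtain ⟨htS, htb⟩ := ht
        rw [← hofftot] at htS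
        rw [hov] at htS
        obtain ⟨v, hv, hv1, hv2⟩ := ms_locate w (n+1) t htS
        rw [← hov] at hv1 hv2
        set i : Fin (n+1) := ⟨v, hv⟩ with hidef
        have hiv : (i : Fin (n+1)).1 = v := rfl
        have hwv : w v = q i - 1 := by rw [← hiv]; exact hwq i
        have hjlt : t - off v < q i - 1 := by omega
        have hjm : t - off v < m := lt_of_lt_of_le hjlt (hclass i)
        have hjmod : (off v + (t - off v)) % m = b := by
          rw [Nat.add_sub_cancel' hv1]; exact htb
        have hj0 := ms_mod_unique hmpos hb hjm hjmod
        refine ⟨i, ?_, ?_⟩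
        · simp only [mem_filter, mem_univ, true_and]
          rw [hczero, hiv, ← hj0]
          exact hjlt
        · show off i.1 + (m + b - (off i.1) % m) % m = t
          rw [hiv, ← hj0]
          omega
    refine ⟨(Finset.range m).image c, ?_, ?_⟩
    · intro c' hc'
      obtain ⟨b, hb, rfl⟩ := Finset.mem_image.mp hc'
      exact hnorm b (Finset.mem_range.mp hb)
    · intro x hx
      obtain ⟨i, hx1, hx0⟩ := ms_norm_one x hx
      have hval0 : (x i).val ≠ 0 := fun h => hx1 ((ZMod.val_eq_zero (x i)).mp h)
      have hvalq : (x i).val < q i := ZMod.val_lt (x i)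
      set j := (x i).val - 1 with hjdef
      have hjq : j < q i - 1 := by omega
      have hjm : j < m := by have := hclass i; omega
      set b := (off i.1 + j) % m with hbdef
      have hbm : b < m := Nat.mod_lt _ hmpos
      have hj0 : j = (m + b - (off i.1) % m) % m := ms_mod_unique hmpos hbm hjm hbdef.symm
      have hcbi : c b i = x i := by
        rw [hcval b i (by omega), ← hj0]
        have e3 : (j + 1 : ℕ) = (x i).val := by omega
        rw [e3]
        have := ZMod.natCast_rightInverse (n := q i)
        exact this (x i)
      have hcbC : c b ∈ (Finset.range m).image c :=
        Finset.mem_image_of_mem c (Finset.mem_range.mpr hbm)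
      refine ⟨c b, ⟨hcbC, (ms_dist_iff hk x i hx1 hx0 (c b) (hnorm b hbm)).mpr hcbi⟩, ?_⟩
      rintro c' ⟨hc'C, hc'd⟩
      obtain ⟨b', hb', rfl⟩ := Finset.mem_image.mp hc'C
      have hb'm := Finset.mem_range.mp hb'
      have hc'i : c b' i = x i := (ms_dist_iff hk x i hx1 hx0 (c b') (hnorm b' hb'm)).mp hc'd
      have hne0 : c b' i ≠ 0 := by rw [hc'i]; exact hx1
      have hlt' := (hczero b' i).mp hne0
      have e := hcval b' i hlt'
      rw [e] at hc'i
      have hqi := hq i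
      have hv' : ((m + b' - (off i.1) % m) % m + 1) = (x i).val := by
        have h5 := congrArg ZMod.val hc'i
        rwa [ZMod.val_cast_of_lt (by omega : (m + b' - (off i.1) % m) % m + 1 < q i)] at h5
      have hj0' : (m + b' - (off i.1) % m) % m = j := by omega
      have hb'b : b' = b := by
        have h6 := ms_mod_key hmpos b' (off i.1) hb'm
        rw [hj0'] at h6
        rw [hbdef]
        exact h6.symm
      rw [hb'b]
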